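/- Let X, Y be topological spaces, F : X → Set Y a lower semicontinuous multifunction with nonempty values, and A ⊆ X a connected set. Assume the set {x ∈ A : F(x) is connected} is dense in A. Then the image F(A) = ⋃_{x ∈ A} F(x) is connected. -/
import Mathlib


/-- Proposition 2.A: the image of a connected set under a lower semicontinuous
multifunction with nonempty values whose values are connected on a dense subset
is connected. -/
theorem stmt7 {X Y : Type*} [TopologicalSpace X] [TopologicalSpace Y]
    (F : X → Set Y)
    (hlsc : ∀ V : Set Y, IsOpen V → IsOpen {x | (F x ∩ V).Nonempty})
    (hne : ∀ x, (F x).Nonempty)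
    (A : Set X) (hA : IsConnected A)
    (hdense : A ⊆ closure {x ∈ A | IsConnected (F x)}) :
    IsConnected (⋃ x ∈ A, F x) := by
  obtain ⟨⟨a, haA⟩, hApre⟩ := hA
  refine ⟨⟨(hne a).some, Set.mem_biUnion haA (hne a).some_mem⟩, ?_⟩
  intro u v hu hv hcover ⟨yu, hyuS, hyuu⟩ ⟨yv, hyvS, hyvv⟩
  -- sets of points whose image meets u, v
  set Wu : Set X := {x | (F x ∩ u).Nonempty} with hWu
  set Wv : Set X := {x | (F x ∩ v).Nonempty} with hWv
  have hWuo : IsOpen Wu := hlsc u hu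
  have hWvo : IsOpen Wv := hlsc v hv
  have hsub : ∀ x ∈ A, F x ⊆ u ∪ v := fun x hx =>
    (Set.subset_biUnion_of_mem hx).trans hcover
  have hAcover : A ⊆ Wu ∪ Wv := by
    intro x hx
    obtain ⟨y, hy⟩ := hne x
    rcases hsub x hx hy with h | h
    · exact Or.inl ⟨y, hy, h⟩
    · exact Or.inr ⟨y, hy, h⟩
  obtain ⟨xu, hxuS⟩ := Set.mem_iUnion₂.mp hyuS
  obtain ⟨hxuA, hyuF⟩ := hxuS
  obtain ⟨xv, hxvS⟩ := Set.mem_iUnion₂.mp hyvS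
  obtain ⟨hxvA, hyvF⟩ := hxvS
  have hAu : (A ∩ Wu).Nonempty := ⟨xu, hxuA, ⟨yu, hyuF, hyuu⟩⟩
  have hAv : (A ∩ Wv).Nonempty := ⟨xv, hxvA, ⟨yv, hyvF, hyvv⟩⟩
  obtain ⟨x0, hx0A, hx0u, hx0v⟩ := hApre Wu Wv hWuo hWvo hAcover hAu hAv
  -- use density to find a point with connected value inside Wu ∩ Wv
  have hx0cl := hdense hx0A
  rw [mem_closure_iff] at hx0cl
  obtain ⟨x1, hx1W, hx1A, hx1conn⟩ :=
    hx0cl (Wu ∩ Wv) (hWuo.inter hWvo) ⟨hx0u, hx0v⟩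
  obtain ⟨hx1u, hx1v⟩ := hx1W
  obtain ⟨y, hyF, hyuv⟩ := hx1conn.isPreconnected u v hu hv (hsub x1 hx1A) hx1u hx1v
  exact ⟨y, Set.mem_biUnion hx1A hyF, hyuv⟩
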